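/- Let α ∈ (0,1), let N be a positive integer, and define W(ζ) = ((ζ−αc)(ζ−α/c)/(ζ(ζ−c)(ζ−1/c)))^{2N} for ζ ∉ {0, c, 1/c}. Then for every complex ζ with ζ ∉ {0, c, 1/c} and ζ⋆ ∉ {0, c}, one has W(ζ⋆) = ((ζ−1/c)^{4N}/R₁^{4N})·W(ζ). -/

import Mathlib

open Complex

noncomputable def cc (α : ℝ) : ℝ := Real.sqrt (α / (1 - α + α ^ 2))
noncomputable def R1 (α : ℝ) : ℝ := (1 - α) / Real.sqrt α

/-- The star operation `ζ⋆ = 1/c + R₁²/(ζ − 1/c)`. -/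
noncomputable def star (α : ℝ) (ζ : ℂ) : ℂ :=
  1 / (cc α : ℂ) + ((R1 α : ℝ) : ℂ) ^ 2 / (ζ - 1 / (cc α : ℂ))

/-- The scalar weight `W` from equation (3.1) of the paper. -/
noncomputable def Wweight (α : ℝ) (N : ℕ) (ζ : ℂ) : ℂ :=
  (((ζ - (α : ℂ) * (cc α : ℂ)) * (ζ - (α : ℂ) / (cc α : ℂ))) /
    (ζ * (ζ - (cc α : ℂ)) * (ζ - 1 / (cc α : ℂ)))) ^ (2 * N)

lemma baseKey (a C R ζ : ℂ) (hC : C ≠ 0) (hR : R ≠ 0) (hζ0 : ζ ≠ 0)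
    (hζC : ζ - C ≠ 0) (hu : ζ - 1/C ≠ 0)
    (hs0 : 1/C + R^2/(ζ - 1/C) ≠ 0) (hsC : 1/C + R^2/(ζ - 1/C) - C ≠ 0)
    (hK : C^2*(1-a+a^2) = a) (hRC : R^2*C^2 = 1-C^2) :
    (((1/C + R^2/(ζ - 1/C)) - a*C) * ((1/C + R^2/(ζ - 1/C)) - a/C)) /
      ((1/C + R^2/(ζ - 1/C)) * ((1/C + R^2/(ζ - 1/C)) - C) * ((1/C + R^2/(ζ - 1/C)) - 1/C)) =
    (ζ - 1/C)^2 / R^2 * (((ζ - a*C) * (ζ - a/C)) / (ζ * (ζ - C) * (ζ - 1/C))) := by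
  have hs1C : (1/C + R^2/(ζ - 1/C)) - 1/C ≠ 0 := by
    rw [add_sub_cancel_left]
    exact div_ne_zero (pow_ne_zero 2 hR) hu
  have huC : ζ * C - 1 ≠ 0 := by
    have h2 := mul_ne_zero hu hC
    intro h
    apply h2
    field_simp
    linear_combination h
  rw [div_mul_div_comm, div_eq_div_iff
    (mul_ne_zero (mul_ne_zero hs0 hsC) hs1C)
    (mul_ne_zero (pow_ne_zero 2 hR) (mul_ne_zero (mul_ne_zero hζ0 hζC) hu))]
  have huC' : C * ζ - 1 ≠ 0 := by rw [mul_comm]; exact huC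
  field_simp [huC, huC']
  have hv : C * (ζ * C - 1) ≠ 0 := mul_ne_zero hC huC
  have hd1 : C * (ζ * C - 1) * (C * (ζ * C - 1) * C) * C ≠ 0 :=
    mul_ne_zero (mul_ne_zero hv (mul_ne_zero hv hC)) hC
  have hd2 : C ^ 2 * C * (C * (ζ * C - 1) * (C * (ζ * C - 1)) * (C * (ζ * C - 1) * C)) ≠ 0 :=
    mul_ne_zero (mul_ne_zero (pow_ne_zero 2 hC) hC)
      (mul_ne_zero (mul_ne_zero hv hv) (mul_ne_zero hv hC))
  apply mul_left_cancel₀ (pow_ne_zero 12 hC)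
  linear_combination
    ((-2)*C^14*ζ^3
      + (3)*C^15*ζ^2
      + (1)*C^15*ζ^4
      + (-1)*C^16*ζ^1
      + (1)*C^16*ζ^3
      + (-3)*C^17*ζ^2
      + (-1)*C^17*ζ^4
      + (1)*C^18*ζ^1
      + (1)*C^18*ζ^3) * hK
    + ((-2)*C^16*ζ^3
      + (1)*C^16*R^2*ζ^1
      + (3)*C^17*ζ^2
      + (1)*C^17*ζ^4
      + (-3)*C^17*R^2*ζ^2
      + (-1)*C^18*ζ^1
      + (-1)*C^18*ζ^3
      + (1)*C^18*R^2*ζ^1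
      + (1)*C^18*R^2*ζ^3
      + (-1)*C^18*R^4*ζ^1
      + (2)*a^1*C^14*ζ^3
      + (-1)*a^1*C^14*R^2*ζ^1
      + (-3)*a^1*C^15*ζ^2
      + (-1)*a^1*C^15*ζ^4
      + (3)*a^1*C^15*R^2*ζ^2
      + (1)*a^1*C^16*ζ^1
      + (3)*a^1*C^16*ζ^3
      + (-2)*a^1*C^16*R^2*ζ^1
      + (-1)*a^1*C^16*R^2*ζ^3
      + (1)*a^1*C^16*R^4*ζ^1
      + (-3)*a^1*C^17*ζ^2
      + (-1)*a^1*C^17*ζ^4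
      + (3)*a^1*C^17*R^2*ζ^2
      + (1)*a^1*C^18*ζ^1
      + (1)*a^1*C^18*ζ^3
      + (-1)*a^1*C^18*R^2*ζ^1
      + (-1)*a^1*C^18*R^2*ζ^3
      + (1)*a^1*C^18*R^4*ζ^1
      + (1)*a^2*C^15*R^2
      + (-2)*a^2*C^16*ζ^3
      + (-2)*a^2*C^16*R^2*ζ^1
      + (3)*a^2*C^17*ζ^2
      + (1)*a^2*C^17*ζ^4
      + (-1)*a^2*C^17*R^4
      + (-1)*a^2*C^18*ζ^1
      + (-1)*a^2*C^18*ζ^3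
      + (1)*a^2*C^18*R^2*ζ^1) * hRC

/-- The symmetry (6.9) of the paper: `W(ζ⋆) = ((ζ−1/c)^{4N}/R₁^{4N}) W(ζ)`. -/
theorem W_star_symmetry (α : ℝ) (hα0 : 0 < α) (hα1 : α < 1) (N : ℕ) (hN : 0 < N)
    (ζ : ℂ)
    (hζ : ζ ∉ ({0, ((cc α : ℂ)), 1 / (cc α : ℂ)} : Set ℂ))
    (hstar : star α ζ ∉ ({0, ((cc α : ℂ))} : Set ℂ)) :
    Wweight α N (star α ζ) =
      ((ζ - 1 / (cc α : ℂ)) ^ (4 * N) / ((R1 α : ℂ)) ^ (4 * N)) * Wweight α N ζ := by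
  simp only [Set.mem_insert_iff, Set.mem_singleton_iff, not_or] at hζ hstar
  obtain ⟨hζ0, hζc, hζic⟩ := hζ
  obtain ⟨hs0', hsC'⟩ := hstar
  have hden : (0:ℝ) < 1 - α + α ^ 2 := by nlinarith
  have hcpos : 0 < cc α := Real.sqrt_pos.mpr (div_pos hα0 hden)
  have hc2 : (cc α) ^ 2 = α / (1 - α + α ^ 2) := Real.sq_sqrt (div_pos hα0 hden).le
  have hRpos : 0 < R1 α := div_pos (by linarith) (Real.sqrt_pos.mpr hα0)
  have hC : ((cc α : ℝ) : ℂ) ≠ 0 := Complex.ofReal_ne_zero.mpr hcpos.ne'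
  have hR : ((R1 α : ℝ) : ℂ) ≠ 0 := Complex.ofReal_ne_zero.mpr hRpos.ne'
  have hKr : (cc α) ^ 2 * (1 - α + α ^ 2) = α := by
    rw [hc2]; field_simp
  have hK : ((cc α : ℝ) : ℂ) ^ 2 * (1 - (α : ℂ) + (α : ℂ) ^ 2) = (α : ℂ) := by
    exact_mod_cast congrArg (Complex.ofReal) hKr
  have hRCr : (R1 α) ^ 2 * (cc α) ^ 2 = 1 - (cc α) ^ 2 := by
    have hRa : (R1 α) ^ 2 = (1 - α) ^ 2 / α := by
      rw [R1, div_pow, Real.sq_sqrt hα0.le]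
    rw [hRa, hc2]
    field_simp
    ring
  have hRC : ((R1 α : ℝ) : ℂ) ^ 2 * ((cc α : ℝ) : ℂ) ^ 2 = 1 - ((cc α : ℝ) : ℂ) ^ 2 := by
    exact_mod_cast congrArg (Complex.ofReal) hRCr
  have hu : ζ - 1 / ((cc α : ℝ) : ℂ) ≠ 0 := sub_ne_zero.mpr hζic
  have hζC : ζ - ((cc α : ℝ) : ℂ) ≠ 0 := sub_ne_zero.mpr hζc
  have hstar_eq : star α ζ = 1 / ((cc α : ℝ) : ℂ) + ((R1 α : ℝ) : ℂ) ^ 2 / (ζ - 1 / ((cc α : ℝ) : ℂ)) := rfl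
  rw [hstar_eq] at hs0' hsC'
  have hsC : 1 / ((cc α : ℝ) : ℂ) + ((R1 α : ℝ) : ℂ) ^ 2 / (ζ - 1 / ((cc α : ℝ) : ℂ)) - ((cc α : ℝ) : ℂ) ≠ 0 :=
    sub_ne_zero.mpr hsC'
  have key := baseKey (α : ℂ) ((cc α : ℝ) : ℂ) ((R1 α : ℝ) : ℂ) ζ hC hR hζ0 hζC hu hs0' hsC hK hRC
  rw [Wweight, Wweight, hstar_eq, key, mul_pow, div_pow, div_pow, ← pow_mul, ← pow_mul,
    show 2 * (2 * N) = 4 * N by ring]
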